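/- Let f be a monotonically increasing weight function with C_f = ∑_{n=1}^∞ 1/f(n) < ∞, and let R, S be matrices with entries in A such that ‖R‖_f < ∞ and ‖S‖_f < ∞. Then the matrix product RS is well-defined (entrywise absolutely convergent) and satisfies ‖RS‖_f ≤ C_f · ‖R‖_f · ‖S‖_f. -/

import Mathlib

/-- The weighted norm `‖T‖_f = sup_{i,j} f(max(i,j))·‖t_{ij}‖` (as a real supremum). -/
noncomputable def wnorm {A : Type*} [NonUnitalNormedRing A]
    (f : ℕ+ → ℝ) (T : ℕ+ → ℕ+ → A) : ℝ :=
  sSup (Set.range fun p : ℕ+ × ℕ+ => f (max p.1 p.2) * ‖T p.1 p.2‖)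

/-- Finiteness of the weighted norm `‖T‖_f`. -/
def WFinite {A : Type*} [NonUnitalNormedRing A]
    (f : ℕ+ → ℝ) (T : ℕ+ → ℕ+ → A) : Prop :=
  BddAbove (Set.range fun p : ℕ+ × ℕ+ => f (max p.1 p.2) * ‖T p.1 p.2‖)

/-- The entrywise matrix product `(RS)_{ij} = ∑_k r_{ik} s_{kj}`. -/
noncomputable def matMul {A : Type*} [NonUnitalNormedRing A]
    (R S : ℕ+ → ℕ+ → A) : ℕ+ → ℕ+ → A :=
  fun i j => ∑' k : ℕ+, R i k * S k j

/-- If `f` is a monotone weight with `C_f = ∑ 1/f(n) < ∞` and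
`‖R‖_f, ‖S‖_f < ∞`, then `RS` is well defined (entrywise absolutely convergent)
and `‖RS‖_f ≤ C_f · ‖R‖_f · ‖S‖_f`. -/
theorem matMul_wnorm_single_weight
    {A : Type*} [NonUnitalNormedRing A] [CompleteSpace A]
    (f : ℕ+ → ℝ) (hfmono : Monotone f) (hfpos : ∀ n, 0 < f n)
    (hCf : Summable fun n : ℕ+ => 1 / f n)
    (R S : ℕ+ → ℕ+ → A)
    (hRf : WFinite f R) (hSf : WFinite f S) :
    (∀ i j : ℕ+, Summable fun k : ℕ+ => ‖R i k‖ * ‖S k j‖) ∧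
    wnorm f (matMul R S) ≤ (∑' n : ℕ+, 1 / f n) * wnorm f R * wnorm f S := by
  set MR := wnorm f R with hMRdef
  set MS := wnorm f S with hMSdef
  have hR : ∀ i k : ℕ+, f (max i k) * ‖R i k‖ ≤ MR := fun i k =>
    le_csSup hRf ⟨(i, k), rfl⟩
  have hS : ∀ k j : ℕ+, f (max k j) * ‖S k j‖ ≤ MS := fun k j =>
    le_csSup hSf ⟨(k, j), rfl⟩
  have hMR0 : 0 ≤ MR := le_trans (mul_nonneg (hfpos _).le (norm_nonneg _)) (hR 1 1)
  have hMS0 : 0 ≤ MS := le_trans (mul_nonneg (hfpos _).le (norm_nonneg _)) (hS 1 1)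
  -- entrywise bounds
  have hRb : ∀ i k : ℕ+, ‖R i k‖ ≤ MR / f k := by
    intro i k
    rw [le_div_iff₀ (hfpos k)]
    calc ‖R i k‖ * f k ≤ ‖R i k‖ * f (max i k) :=
          mul_le_mul_of_nonneg_left (hfmono (le_max_right i k)) (norm_nonneg _)
      _ = f (max i k) * ‖R i k‖ := by ring
      _ ≤ MR := hR i k
  have hSb : ∀ k j : ℕ+, ‖S k j‖ ≤ MS / f 1 := by
    intro k j
    rw [le_div_iff₀ (hfpos 1)]
    calc ‖S k j‖ * f 1 ≤ ‖S k j‖ * f (max k j) :=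
          mul_le_mul_of_nonneg_left (hfmono (by exact_mod_cast PNat.one_le _)) (norm_nonneg _)
      _ = f (max k j) * ‖S k j‖ := by ring
      _ ≤ MS := hS k j
  have hsum : ∀ i j : ℕ+, Summable fun k : ℕ+ => ‖R i k‖ * ‖S k j‖ := by
    intro i j
    apply Summable.of_nonneg_of_le (fun k => by positivity)
      (fun k => ?_) (((hCf.mul_left (MR * (MS / f 1)))))
    calc ‖R i k‖ * ‖S k j‖ ≤ (MR / f k) * (MS / f 1) :=
          mul_le_mul (hRb i k) (hSb k j) (norm_nonneg _) (div_nonneg hMR0 (hfpos k).le)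
      _ = MR * (MS / f 1) * (1 / f k) := by field_simp
  refine ⟨hsum, ?_⟩
  have hC0 : 0 ≤ ∑' n : ℕ+, 1 / f n :=
    tsum_nonneg fun n => one_div_nonneg.mpr (hfpos n).le
  apply Real.sSup_le
  · rintro x ⟨⟨i, j⟩, rfl⟩
    simp only
    -- key pointwise bound
    have key : ∀ k : ℕ+, f (max i j) * (‖R i k‖ * ‖S k j‖) ≤ MR * MS * (1 / f k) := by
      intro k
      have hk := hfpos k
      rw [mul_one_div, le_div_iff₀ hk]
      have ha : (0:ℝ) ≤ ‖R i k‖ := norm_nonneg _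
      have hb : (0:ℝ) ≤ ‖S k j‖ := norm_nonneg _
      have hmax : max i j ≤ max (max i k) (max k j) :=
        max_le_max (le_max_left i k) (le_max_right k j)
      rcases le_total (max i k) (max k j) with hcase | hcase
      · -- max i j ≤ max k j
        have h1 : f (max i j) ≤ f (max k j) := hfmono (by
          simpa [max_eq_right hcase] using hmax)
        have h2 : f k ≤ f (max i k) := hfmono (le_max_right i k)
        calc f (max i j) * (‖R i k‖ * ‖S k j‖) * f k
            ≤ f (max k j) * (‖R i k‖ * ‖S k j‖) * f (max i k) := by
              apply mul_le_mul (mul_le_mul_of_nonneg_right h1 (by positivity)) h2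
                (le_of_lt hk) (mul_nonneg (hfpos _).le (mul_nonneg ha hb))
          _ = (f (max i k) * ‖R i k‖) * (f (max k j) * ‖S k j‖) := by ring
          _ ≤ MR * MS := mul_le_mul (hR i k) (hS k j) (mul_nonneg (hfpos _).le hb) hMR0
      · -- max i j ≤ max i k
        have h1 : f (max i j) ≤ f (max i k) := hfmono (by
          simpa [max_eq_left hcase] using hmax)
        have h2 : f k ≤ f (max k j) := hfmono (le_max_left k j)
        calc f (max i j) * (‖R i k‖ * ‖S k j‖) * f k
            ≤ f (max i k) * (‖R i k‖ * ‖S k j‖) * f (max k j) := by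
              apply mul_le_mul (mul_le_mul_of_nonneg_right h1 (by positivity)) h2
                (le_of_lt hk) (mul_nonneg (hfpos _).le (mul_nonneg ha hb))
          _ = (f (max i k) * ‖R i k‖) * (f (max k j) * ‖S k j‖) := by ring
          _ ≤ MR * MS := mul_le_mul (hR i k) (hS k j) (mul_nonneg (hfpos _).le hb) hMR0
    have hsummul : Summable fun k : ℕ+ => ‖R i k * S k j‖ :=
      Summable.of_nonneg_of_le (fun k => norm_nonneg _) (fun k => norm_mul_le _ _) (hsum i j)
    have hf0 : 0 ≤ f (max i j) := le_of_lt (hfpos _)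
    calc f (max i j) * ‖matMul R S i j‖
        ≤ f (max i j) * ∑' k : ℕ+, ‖R i k * S k j‖ :=
          mul_le_mul_of_nonneg_left (norm_tsum_le_tsum_norm hsummul) hf0
      _ ≤ f (max i j) * ∑' k : ℕ+, ‖R i k‖ * ‖S k j‖ :=
          mul_le_mul_of_nonneg_left
            (Summable.tsum_le_tsum (fun k => norm_mul_le _ _) hsummul (hsum i j)) hf0
      _ = ∑' k : ℕ+, f (max i j) * (‖R i k‖ * ‖S k j‖) := (tsum_mul_left).symm
      _ ≤ ∑' k : ℕ+, MR * MS * (1 / f k) :=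
          Summable.tsum_le_tsum key ((hsum i j).mul_left _) (hCf.mul_left _)
      _ = MR * MS * ∑' k : ℕ+, 1 / f k := tsum_mul_left
      _ = (∑' n : ℕ+, 1 / f n) * MR * MS := by ring
  · positivity
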